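/- arXiv:1505.03342 — 5 statements merged into one kernel-verified Lean document; each statement's English description precedes it below -/
import Mathlib

section
/- Let P be a choice process with P^l > 0 and P^r > 0. If the function Q^l(t) = P({l} × [0, t]) / F(t) is nondecreasing on the set {t : F(t) > 0}, then F^l(t) ≤ F^r(t) for every t ∈ T, i.e., the conditional decision-time distribution given choice l first-order stochastically dominates the one given choice r; symmetrically, if Q^l is nonincreasing then F^l(t) ≥ F^r(t) for all t, and if Q^l is constant then F^l = F^r. -/
open MeasureTheory Filter Topology
open scoped NNReal ENNReal

/-- For a choice process `P` on `A × T` (`A = Bool`, `true = l`,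
`false = r`, `T = ℝ≥0`) with `P^l > 0` and `P^r > 0`: if
`Q^l(t) = P({l} × [0,t]) / F(t)` is nondecreasing on `{t | F(t) > 0}`, then
`F^l(t) ≤ F^r(t)` for all `t` (the conditional decision-time distribution given
`l` first-order stochastically dominates the one given `r`); if `Q^l` is
nonincreasing there then `F^l(t) ≥ F^r(t)` for all `t`; and if `Q^l` is constant
there then `F^l = F^r`. -/
theorem stmt_2
    (P : Measure (Bool × ℝ≥0)) [IsProbabilityMeasure P]
    (Pl Pr : ℝ)
    (hPl : Pl = (P ({true} ×ˢ (Set.univ : Set ℝ≥0))).toReal)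
    (hPr : Pr = (P ({false} ×ˢ (Set.univ : Set ℝ≥0))).toReal)
    (hPlpos : 0 < Pl) (hPrpos : 0 < Pr)
    (Fc Fl Fr Q : ℝ≥0 → ℝ)
    (hFc : ∀ t, Fc t = (P (Set.univ ×ˢ Set.Iic t)).toReal)
    (hFl : ∀ t, Fl t = (P ({true} ×ˢ Set.Iic t)).toReal / Pl)
    (hFr : ∀ t, Fr t = (P ({false} ×ˢ Set.Iic t)).toReal / Pr)
    (hQ : ∀ t, Q t = (P ({true} ×ˢ Set.Iic t)).toReal / Fc t) :
    (MonotoneOn Q {t | 0 < Fc t} → ∀ t, Fl t ≤ Fr t) ∧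
    (AntitoneOn Q {t | 0 < Fc t} → ∀ t, Fr t ≤ Fl t) ∧
    ((∀ s ∈ {t | 0 < Fc t}, ∀ t ∈ {t | 0 < Fc t}, Q s = Q t) → ∀ t, Fl t = Fr t) := by
  set G : ℝ≥0 → ℝ := fun t => (P ({true} ×ˢ Set.Iic t)).toReal with hG
  set H : ℝ≥0 → ℝ := fun t => (P ({false} ×ˢ Set.Iic t)).toReal with hH
  have hGnn : ∀ t, 0 ≤ G t := fun t => ENNReal.toReal_nonneg
  have hHnn : ∀ t, 0 ≤ H t := fun t => ENNReal.toReal_nonneg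
  -- Fc = G + H
  have hsplit : ∀ t, Fc t = G t + H t := by
    intro t
    rw [hFc]
    have huniv : (Set.univ : Set Bool) ×ˢ Set.Iic t
        = ({true} ×ˢ Set.Iic t) ∪ ({false} ×ˢ Set.Iic t) := by
      ext ⟨b, x⟩
      rcases b <;> simp
    rw [huniv, measure_union]
    · rw [ENNReal.toReal_add (measure_ne_top P _) (measure_ne_top P _)]
    · simp [Set.disjoint_left, Set.mem_prod]
    · exact (measurableSet_singleton false).prod measurableSet_Iic
  -- limits
  have hGlim : Tendsto (fun n : ℕ => G (n : ℝ≥0)) atTop (𝓝 Pl) := by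
    rw [hPl]
    have hm : Monotone (fun n : ℕ => ({true} : Set Bool) ×ˢ Set.Iic ((n : ℝ≥0))) := by
      intro a b hab
      exact Set.prod_mono le_rfl (Set.Iic_subset_Iic.2 (by exact_mod_cast hab))
    have := tendsto_measure_iUnion_atTop (μ := P) hm
    have hU : (⋃ n : ℕ, ({true} : Set Bool) ×ˢ Set.Iic ((n : ℝ≥0)))
        = {true} ×ˢ (Set.univ : Set ℝ≥0) := by
      ext ⟨b, x⟩
      simp only [Set.mem_iUnion, Set.mem_prod, Set.mem_Iic, Set.mem_univ, and_true,
        Set.mem_singleton_iff]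
      constructor
      · rintro ⟨n, hb, _⟩; exact hb
      · intro hb
        obtain ⟨n, hn⟩ := exists_nat_ge x
        exact ⟨n, hb, hn⟩
    rw [hU] at this
    exact (ENNReal.tendsto_toReal (measure_ne_top P _)).comp this
  have hHlim : Tendsto (fun n : ℕ => H (n : ℝ≥0)) atTop (𝓝 Pr) := by
    rw [hPr]
    have hm : Monotone (fun n : ℕ => ({false} : Set Bool) ×ˢ Set.Iic ((n : ℝ≥0))) := by
      intro a b hab
      exact Set.prod_mono le_rfl (Set.Iic_subset_Iic.2 (by exact_mod_cast hab))
    have := tendsto_measure_iUnion_atTop (μ := P) hm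
    have hU : (⋃ n : ℕ, ({false} : Set Bool) ×ˢ Set.Iic ((n : ℝ≥0)))
        = {false} ×ˢ (Set.univ : Set ℝ≥0) := by
      ext ⟨b, x⟩
      simp only [Set.mem_iUnion, Set.mem_prod, Set.mem_Iic, Set.mem_univ, and_true,
        Set.mem_singleton_iff]
      constructor
      · rintro ⟨n, hb, _⟩; exact hb
      · intro hb
        obtain ⟨n, hn⟩ := exists_nat_ge x
        exact ⟨n, hb, hn⟩
    rw [hU] at this
    exact (ENNReal.tendsto_toReal (measure_ne_top P _)).comp this
  -- eventually Fc n > 0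
  have hFcev : ∀ᶠ n : ℕ in atTop, 0 < Fc (n : ℝ≥0) := by
    have : ∀ᶠ n : ℕ in atTop, Pl / 2 < G (n : ℝ≥0) :=
      hGlim.eventually (eventually_gt_nhds (by linarith))
    filter_upwards [this] with n hn
    rw [hsplit]
    have := hHnn (n : ℝ≥0)
    linarith
  -- cross inequality from monotonicity
  have cross_mono : MonotoneOn Q {t | 0 < Fc t} →
      ∀ t, G t * Pr ≤ Pl * H t := by
    intro hmono t
    by_cases ht : 0 < Fc t
    · have hev : ∀ᶠ n : ℕ in atTop, G t * H (n : ℝ≥0) ≤ G (n : ℝ≥0) * H t := by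
        obtain ⟨N, hN⟩ := exists_nat_ge t
        filter_upwards [hFcev, eventually_ge_atTop N] with n hn hnN
        have hts : t ≤ (n : ℝ≥0) := le_trans hN (by exact_mod_cast hnN)
        have hQle := hmono ht hn hts
        rw [hQ, hQ] at hQle
        rw [div_le_div_iff₀ ht hn] at hQle
        change G t * Fc _ ≤ G _ * Fc t at hQle
        rw [hsplit t, hsplit (n : ℝ≥0)] at hQle
        nlinarith
      have h1 : Tendsto (fun n : ℕ => G t * H (n : ℝ≥0)) atTop (𝓝 (G t * Pr)) :=
        hHlim.const_mul _
      have h2 : Tendsto (fun n : ℕ => G (n : ℝ≥0) * H t) atTop (𝓝 (Pl * H t)) :=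
        hGlim.mul_const _
      exact le_of_tendsto_of_tendsto h1 h2 hev
    · have hG0 : G t = 0 := by
        have h1 := hsplit t
        have := hGnn t; have := hHnn t
        nlinarith [not_lt.mp ht]
      rw [hG0]
      have := hHnn t
      nlinarith
  have cross_anti : AntitoneOn Q {t | 0 < Fc t} →
      ∀ t, Pl * H t ≤ G t * Pr := by
    intro hanti t
    by_cases ht : 0 < Fc t
    · have hev : ∀ᶠ n : ℕ in atTop, G (n : ℝ≥0) * H t ≤ G t * H (n : ℝ≥0) := by
        obtain ⟨N, hN⟩ := exists_nat_ge t
        filter_upwards [hFcev, eventually_ge_atTop N] with n hn hnN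
        have hts : t ≤ (n : ℝ≥0) := le_trans hN (by exact_mod_cast hnN)
        have hQle := hanti ht hn hts
        rw [hQ, hQ] at hQle
        rw [div_le_div_iff₀ hn ht] at hQle
        change G _ * Fc t ≤ G t * Fc _ at hQle
        rw [hsplit t, hsplit (n : ℝ≥0)] at hQle
        nlinarith
      have h1 : Tendsto (fun n : ℕ => G t * H (n : ℝ≥0)) atTop (𝓝 (G t * Pr)) :=
        hHlim.const_mul _
      have h2 : Tendsto (fun n : ℕ => G (n : ℝ≥0) * H t) atTop (𝓝 (Pl * H t)) :=
        hGlim.mul_const _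
      exact le_of_tendsto_of_tendsto h2 h1 hev
    · have hH0 : H t = 0 := by
        have h1 := hsplit t
        have := hGnn t; have := hHnn t
        nlinarith [not_lt.mp ht]
      rw [hH0]
      have := hGnn t
      nlinarith
  refine ⟨?_, ?_, ?_⟩
  · intro hmono t
    have := cross_mono hmono t
    rw [hFl, hFr]
    rw [div_le_div_iff₀ hPlpos hPrpos]
    linarith
  · intro hanti t
    have := cross_anti hanti t
    rw [hFl, hFr]
    rw [div_le_div_iff₀ hPrpos hPlpos]
    linarith
  · intro hconst t
    have hm : MonotoneOn Q {t | 0 < Fc t} := fun a ha b hb _ => le_of_eq (hconst a ha b hb)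
    have ha : AntitoneOn Q {t | 0 < Fc t} := fun a ha b hb _ => ge_of_eq (hconst a ha b hb)
    have h1 := cross_mono hm t
    have h2 := cross_anti ha t
    rw [hFl, hFr]
    rw [div_eq_div_iff hPlpos.ne' hPrpos.ne']
    linarith
end

section
/- Let k : [0, ∞) × (0, ∞) × (0, ∞) × (0, ∞) → ℝ (arguments (t, c, σ₀, α)) satisfy, for all t ≥ 0 and all c, σ₀, α, λ > 0: (1) k(t, c, σ₀, α) = k(0, c, σ_t, α), where σ_t := (σ₀⁻² + α⁻²t)^(−1/2); (2) k(0, c, λσ₀, α) = λ·k(0, cλ⁻³, σ₀, α); (3) k(t, c, σ₀, λα) = λ·k(t, λ⁻¹c, λ⁻¹σ₀, α); (4) k(0, λc, σ₀, α) = λ⁻¹·k(0, c, σ₀, α). Then, with κ := k(0, 1, 1, 1), for all t ≥ 0 and c, σ₀, α > 0: k(t, c, σ₀, α) = κ / (c·α²·(σ₀⁻² + α⁻²t)²), and consequently the associated signal-space boundary b(t, c, σ₀, α) := k(t, c, σ₀, α)·σ_t⁻² equals κ / (c·α²·(σ₀⁻² + α⁻²t)). -/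
/-- The posterior standard deviation at time `t`:
`σ_t = (σ₀⁻² + α⁻² t)^(−1/2)`. -/
noncomputable def postSD (σ₀ α t : ℝ) : ℝ :=
  (Real.sqrt ((σ₀ ^ 2)⁻¹ + (α ^ 2)⁻¹ * t))⁻¹

/-- If `k(t, c, σ₀, α)` satisfies the four scaling relations
(1) `k(t, c, σ₀, α) = k(0, c, σ_t, α)` with `σ_t = (σ₀⁻² + α⁻²t)^(−1/2)`,
(2) `k(0, c, λσ₀, α) = λ k(0, cλ⁻³, σ₀, α)`,
(3) `k(t, c, σ₀, λα) = λ k(t, λ⁻¹c, λ⁻¹σ₀, α)`,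
(4) `k(0, λc, σ₀, α) = λ⁻¹ k(0, c, σ₀, α)`,
then with `κ = k(0,1,1,1)` we have `k(t, c, σ₀, α) = κ / (c α² (σ₀⁻² + α⁻²t)²)`,
and the signal-space boundary `b = k·σ_t⁻²` equals `κ / (c α² (σ₀⁻² + α⁻²t))`. -/
theorem stmt_5 (k : ℝ → ℝ → ℝ → ℝ → ℝ)
    (h1 : ∀ t c σ₀ α : ℝ, 0 ≤ t → 0 < c → 0 < σ₀ → 0 < α →
      k t c σ₀ α = k 0 c (postSD σ₀ α t) α)
    (h2 : ∀ c σ₀ α lam : ℝ, 0 < c → 0 < σ₀ → 0 < α → 0 < lam →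
      k 0 c (lam * σ₀) α = lam * k 0 (c * lam⁻¹ ^ 3) σ₀ α)
    (h3 : ∀ t c σ₀ α lam : ℝ, 0 ≤ t → 0 < c → 0 < σ₀ → 0 < α → 0 < lam →
      k t c σ₀ (lam * α) = lam * k t (lam⁻¹ * c) (lam⁻¹ * σ₀) α)
    (h4 : ∀ c σ₀ α lam : ℝ, 0 < c → 0 < σ₀ → 0 < α → 0 < lam →
      k 0 (lam * c) σ₀ α = lam⁻¹ * k 0 c σ₀ α) :
    ∀ t c σ₀ α : ℝ, 0 ≤ t → 0 < c → 0 < σ₀ → 0 < α →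
      k t c σ₀ α = k 0 1 1 1 / (c * α ^ 2 * ((σ₀ ^ 2)⁻¹ + (α ^ 2)⁻¹ * t) ^ 2) ∧
      k t c σ₀ α * ((postSD σ₀ α t) ^ 2)⁻¹ =
        k 0 1 1 1 / (c * α ^ 2 * ((σ₀ ^ 2)⁻¹ + (α ^ 2)⁻¹ * t)) := by
  -- step A: k 0 c σ₀ 1 = κ σ₀^4 / c
  have keyA : ∀ c σ₀ : ℝ, 0 < c → 0 < σ₀ →
      k 0 c σ₀ 1 = k 0 1 1 1 * σ₀ ^ 4 / c := by
    intro c σ₀ hc hσ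
    have e1 : k 0 c (σ₀ * 1) 1 = σ₀ * k 0 (c * σ₀⁻¹ ^ 3) 1 1 :=
      h2 c 1 1 σ₀ hc one_pos one_pos hσ
    have hcs : (0 : ℝ) < c * σ₀⁻¹ ^ 3 := by positivity
    have e2 : k 0 ((c * σ₀⁻¹ ^ 3) * 1) 1 1 = (c * σ₀⁻¹ ^ 3)⁻¹ * k 0 1 1 1 :=
      h4 1 1 1 (c * σ₀⁻¹ ^ 3) one_pos one_pos one_pos hcs
    rw [mul_one] at e1
    rw [mul_one] at e2
    rw [e1, e2]
    field_simp
  -- step B: k 0 c σ₀ α = κ σ₀^4 / (c α^2)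
  have keyB : ∀ c σ₀ α : ℝ, 0 < c → 0 < σ₀ → 0 < α →
      k 0 c σ₀ α = k 0 1 1 1 * σ₀ ^ 4 / (c * α ^ 2) := by
    intro c σ₀ α hc hσ hα
    have e1 : k 0 c σ₀ (α * 1) = α * k 0 (α⁻¹ * c) (α⁻¹ * σ₀) 1 :=
      h3 0 c σ₀ 1 α le_rfl hc hσ one_pos hα
    rw [mul_one] at e1
    have hac : (0 : ℝ) < α⁻¹ * c := by positivity
    have has : (0 : ℝ) < α⁻¹ * σ₀ := by positivity
    rw [e1, keyA _ _ hac has]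
    field_simp
  intro t c σ₀ α ht hc hσ hα
  have hk0 := h1 t c σ₀ α ht hc hσ hα
  have hsd : postSD σ₀ α t = (Real.sqrt ((σ₀ ^ 2)⁻¹ + (α ^ 2)⁻¹ * t))⁻¹ := rfl
  rw [hsd] at hk0 ⊢
  have hspos : 0 < (σ₀ ^ 2)⁻¹ + (α ^ 2)⁻¹ * t := by positivity
  revert hspos hk0
  generalize (σ₀ ^ 2)⁻¹ + (α ^ 2)⁻¹ * t = s
  intro hk0 hspos
  have hsqpos : 0 < Real.sqrt s := Real.sqrt_pos.mpr hspos
  have hsdpos : 0 < (Real.sqrt s)⁻¹ := by positivity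
  rw [keyB c _ α hc hsdpos hα] at hk0
  have h4s : ((Real.sqrt s)⁻¹) ^ 4 = (s ^ 2)⁻¹ := by
    rw [inv_pow, show (4 : ℕ) = 2 * 2 from rfl, pow_mul, Real.sq_sqrt hspos.le]
  have h2s : ((Real.sqrt s)⁻¹ ^ 2)⁻¹ = s := by
    rw [inv_pow, Real.sq_sqrt hspos.le, inv_inv]
  rw [hk0, h4s, h2s]
  constructor
  · rw [div_eq_div_iff (by positivity) (by positivity)]; field_simp
  · rw [div_mul_eq_mul_div, div_eq_div_iff (by positivity) (by positivity)]; field_simp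
end

section
/- Let (Ω, ℱ, ℙ) be a probability space, let θ^l and θ^r be integrable real-valued random variables, let 𝒢 ⊆ ℱ be a sub-σ-algebra, and set X^i = E[θ^i | 𝒢] for i ∈ {l, r}. Then E[ 1_{X^l ≥ X^r}·X^l + 1_{X^r > X^l}·X^r ] − E[ max(θ^l, θ^r) ] = E[ −1_{X^l ≥ X^r}·(θ^r − θ^l)⁺ − 1_{X^r > X^l}·(θ^l − θ^r)⁺ ], where x⁺ = max(x, 0). In particular, the objective 'expected posterior maximum' and the Chernoff ex post regret objective 'minus the expected forgone utility of the unchosen action' differ by the constant E[max(θ^l, θ^r)], which does not depend on 𝒢. -/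
open MeasureTheory

/-- For integrable `θˡ, θʳ` on a probability space, a sub-σ-algebra
`𝒢`, and posterior means `Xⁱ = E[θⁱ | 𝒢]`, the expected posterior maximum minus
`E[max(θˡ, θʳ)]` equals the Chernoff ex-post-regret objective
`E[−1_{Xˡ ≥ Xʳ}(θʳ − θˡ)⁺ − 1_{Xʳ > Xˡ}(θˡ − θʳ)⁺]`; the two objectives differ
by the constant `E[max(θˡ, θʳ)]`, which does not depend on `𝒢`. -/
theorem stmt_6 {Ω : Type*} {m : MeasurableSpace Ω} (μ : Measure Ω)
    [IsProbabilityMeasure μ]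
    (θl θr : Ω → ℝ) (hθl : Integrable θl μ) (hθr : Integrable θr μ)
    (G : MeasurableSpace Ω) (hG : G ≤ m)
    (Xl Xr : Ω → ℝ) (hXl : Xl = μ[θl|G]) (hXr : Xr = μ[θr|G]) :
    (∫ ω, ((if Xr ω ≤ Xl ω then Xl ω else 0) +
            (if Xl ω < Xr ω then Xr ω else 0)) ∂μ)
      - ∫ ω, max (θl ω) (θr ω) ∂μ
    = ∫ ω, (-(if Xr ω ≤ Xl ω then max (θr ω - θl ω) 0 else 0)
            - (if Xl ω < Xr ω then max (θl ω - θr ω) 0 else 0)) ∂μ := by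
  -- Extract all facts that mention `G`, then discard `G` to avoid instance clashes.
  subst hXl hXr
  have hAG : MeasurableSet[G] {ω | (μ[θr|G]) ω ≤ (μ[θl|G]) ω} :=
    measurableSet_le stronglyMeasurable_condExp.measurable
      stronglyMeasurable_condExp.measurable
  have hXlm : Integrable (μ[θl|G]) μ := integrable_condExp
  have hXrm : Integrable (μ[θr|G]) μ := integrable_condExp
  have hA : MeasurableSet[m] {ω | (μ[θr|G]) ω ≤ (μ[θl|G]) ω} := hG _ hAG
  have c1 : ∫ ω in {ω | (μ[θr|G]) ω ≤ (μ[θl|G]) ω}, (μ[θl|G]) ω ∂μ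
      = ∫ ω in {ω | (μ[θr|G]) ω ≤ (μ[θl|G]) ω}, θl ω ∂μ :=
    setIntegral_condExp hG hθl hAG
  have c2 : ∫ ω in {ω | (μ[θr|G]) ω ≤ (μ[θl|G]) ω}ᶜ, (μ[θr|G]) ω ∂μ
      = ∫ ω in {ω | (μ[θr|G]) ω ≤ (μ[θl|G]) ω}ᶜ, θr ω ∂μ :=
    setIntegral_condExp hG hθr hAG.compl
  clear hAG
  revert hXlm hXrm hA c1 c2
  generalize (μ[θl|G]) = Xl
  generalize (μ[θr|G]) = Xr
  clear hG G
  intro hXlm hXrm hA c1 c2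
  set A := {ω | Xr ω ≤ Xl ω} with hAdef
  have hmemA : ∀ ω, ω ∈ A ↔ Xr ω ≤ Xl ω := fun ω => Iff.rfl
  have hmemAc : ∀ ω, ω ∈ Aᶜ ↔ Xl ω < Xr ω := fun ω => by simp [hAdef, not_le]
  have hmax : Integrable (fun ω => max (θl ω) (θr ω)) μ := hθl.sup hθr
  have e1 : ∫ ω, ((if Xr ω ≤ Xl ω then Xl ω else 0) +
            (if Xl ω < Xr ω then Xr ω else 0)) ∂μ
      = (∫ ω in A, Xl ω ∂μ) + ∫ ω in Aᶜ, Xr ω ∂μ := by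
    rw [← integral_indicator hA, ← integral_indicator hA.compl,
      ← integral_add (hXlm.indicator hA) (hXrm.indicator hA.compl)]
    refine integral_congr_ae (ae_of_all _ fun ω => ?_)
    simp only [Set.indicator_apply, hmemA, hmemAc]
  have e2 : ∫ ω, (-(if Xr ω ≤ Xl ω then max (θr ω - θl ω) 0 else 0)
            - (if Xl ω < Xr ω then max (θl ω - θr ω) 0 else 0)) ∂μ
      = (∫ ω in A, -(max (θr ω - θl ω) 0) ∂μ)
        + ∫ ω in Aᶜ, -(max (θl ω - θr ω) 0) ∂μ := by
    have h1 : Integrable (fun ω => -(max (θr ω - θl ω) 0)) μ :=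
      (hθr.sub hθl).pos_part.neg
    have h2 : Integrable (fun ω => -(max (θl ω - θr ω) 0)) μ :=
      (hθl.sub hθr).pos_part.neg
    rw [← integral_indicator hA, ← integral_indicator hA.compl,
      ← integral_add (h1.indicator hA) (h2.indicator hA.compl)]
    refine integral_congr_ae (ae_of_all _ fun ω => ?_)
    simp only [Set.indicator_apply, hmemA, hmemAc]
    by_cases h : Xr ω ≤ Xl ω
    · simp [h, not_lt.2 h]
    · simp [h, not_le.1 h]
  have emax : ∫ ω, max (θl ω) (θr ω) ∂μ
      = (∫ ω in A, max (θl ω) (θr ω) ∂μ) + ∫ ω in Aᶜ, max (θl ω) (θr ω) ∂μ :=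
    (integral_add_compl hA hmax).symm
  rw [e1, e2, c1, c2, emax]
  have d1 : ∫ ω in A, θl ω ∂μ - ∫ ω in A, max (θl ω) (θr ω) ∂μ
      = ∫ ω in A, -(max (θr ω - θl ω) 0) ∂μ := by
    rw [← integral_sub hθl.integrableOn hmax.integrableOn]
    refine integral_congr_ae (ae_of_all _ fun ω => ?_)
    show θl ω - max (θl ω) (θr ω) = -(max (θr ω - θl ω) 0)
    rcases le_total (θl ω) (θr ω) with h | h
    · rw [max_eq_right h, max_eq_left (sub_nonneg.2 h)]; ring
    · rw [max_eq_left h, max_eq_right (sub_nonpos.2 h)]; ring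
  have d2 : ∫ ω in Aᶜ, θr ω ∂μ - ∫ ω in Aᶜ, max (θl ω) (θr ω) ∂μ
      = ∫ ω in Aᶜ, -(max (θl ω - θr ω) 0) ∂μ := by
    rw [← integral_sub hθr.integrableOn hmax.integrableOn]
    refine integral_congr_ae (ae_of_all _ fun ω => ?_)
    show θr ω - max (θl ω) (θr ω) = -(max (θl ω - θr ω) 0)
    rcases le_total (θl ω) (θr ω) with h | h
    · rw [max_eq_right h, max_eq_right (sub_nonpos.2 h)]; ring
    · rw [max_eq_left h, max_eq_left (sub_nonneg.2 h)]; ring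
  linarith [d1, d2]
end

section
/- Let k : [0, ∞) × (0, ∞) × (0, ∞) × (0, ∞) → [0, ∞) (arguments (t, c, σ₀, α)) satisfy, for all t ≥ 0 and all c, σ₀, α > 0: (1) k(t, c, σ₀, α) = k(0, c, σ_t, α) with σ_t := (σ₀⁻² + α⁻²t)^(−1/2); (2) k(0, c, λσ₀, α) = λ·k(0, cλ⁻³, σ₀, α) for all λ > 0; (3) k(0, λc, σ₀, α) ≥ λ⁻¹·k(0, c, σ₀, α) for all λ ≥ 1; and suppose t ↦ k(t, c, σ₀, α) is nonincreasing. Then for all t, ε ≥ 0: 0 ≥ k(t + ε, c, σ₀, α) − k(t, c, σ₀, α) ≥ [ (1 + ε·α⁻²·σ_t²)⁻² − 1 ]·k(t, c, σ₀, α) ≥ −2ε·α⁻²·σ₀²·k(0, c, σ₀, α). In particular, for fixed (c, σ₀, α), the function t ↦ k(t, c, σ₀, α) is Lipschitz continuous with Lipschitz constant 2α⁻²σ₀²·k(0, c, σ₀, α). -/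
/-- The posterior variance at time `t`: `σ_t² = (σ₀⁻² + α⁻² t)⁻¹`. -/
noncomputable def postVar (σ₀ α t : ℝ) : ℝ :=
  ((σ₀ ^ 2)⁻¹ + (α ^ 2)⁻¹ * t)⁻¹

/-- If `k(t, c, σ₀, α) ≥ 0` satisfies
(1) `k(t, c, σ₀, α) = k(0, c, σ_t, α)` with `σ_t = (σ₀⁻² + α⁻²t)^(−1/2)`,
(2) `k(0, c, λσ₀, α) = λ k(0, cλ⁻³, σ₀, α)` for `λ > 0`,
(3) `k(0, λc, σ₀, α) ≥ λ⁻¹ k(0, c, σ₀, α)` for `λ ≥ 1`,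
and `t ↦ k(t, c, σ₀, α)` is nonincreasing, then for all `t, ε ≥ 0`,
`0 ≥ k(t+ε) − k(t) ≥ ((1 + ε α⁻² σ_t²)⁻² − 1)·k(t) ≥ −2ε α⁻² σ₀²·k(0)`;
in particular `t ↦ k(t, c, σ₀, α)` is Lipschitz with constant
`2 α⁻² σ₀² k(0, c, σ₀, α)`. -/
theorem stmt_7 (k : ℝ → ℝ → ℝ → ℝ → ℝ)
    (hknn : ∀ t c σ₀ α : ℝ, 0 ≤ t → 0 < c → 0 < σ₀ → 0 < α → 0 ≤ k t c σ₀ α)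
    (h1 : ∀ t c σ₀ α : ℝ, 0 ≤ t → 0 < c → 0 < σ₀ → 0 < α →
      k t c σ₀ α = k 0 c (Real.sqrt (postVar σ₀ α t)) α)
    (h2 : ∀ c σ₀ α lam : ℝ, 0 < c → 0 < σ₀ → 0 < α → 0 < lam →
      k 0 c (lam * σ₀) α = lam * k 0 (c * lam⁻¹ ^ 3) σ₀ α)
    (h3 : ∀ c σ₀ α lam : ℝ, 0 < c → 0 < σ₀ → 0 < α → 1 ≤ lam →
      lam⁻¹ * k 0 c σ₀ α ≤ k 0 (lam * c) σ₀ α)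
    (hmono : ∀ c σ₀ α : ℝ, 0 < c → 0 < σ₀ → 0 < α →
      AntitoneOn (fun t => k t c σ₀ α) (Set.Ici 0)) :
    ∀ c σ₀ α : ℝ, 0 < c → 0 < σ₀ → 0 < α →
      (∀ t ε : ℝ, 0 ≤ t → 0 ≤ ε →
        (k (t + ε) c σ₀ α - k t c σ₀ α ≤ 0 ∧
         ((1 + ε * (α ^ 2)⁻¹ * postVar σ₀ α t)⁻¹ ^ 2 - 1) * k t c σ₀ α ≤
           k (t + ε) c σ₀ α - k t c σ₀ α ∧
         -(2 * ε * (α ^ 2)⁻¹ * σ₀ ^ 2 * k 0 c σ₀ α) ≤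
           ((1 + ε * (α ^ 2)⁻¹ * postVar σ₀ α t)⁻¹ ^ 2 - 1) * k t c σ₀ α)) ∧
      (∀ t s : ℝ, 0 ≤ t → 0 ≤ s →
        |k t c σ₀ α - k s c σ₀ α| ≤
          2 * (α ^ 2)⁻¹ * σ₀ ^ 2 * k 0 c σ₀ α * |t - s|) := by
  intro c σ₀ α hc hσ hα
  have hα2 : (0:ℝ) < (α ^ 2)⁻¹ := by positivity
  have hpV : ∀ t : ℝ, 0 ≤ t → 0 < postVar σ₀ α t := by
    intro t ht
    have : (0:ℝ) < (σ₀ ^ 2)⁻¹ + (α ^ 2)⁻¹ * t := by positivity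
    exact inv_pos.mpr this
  have hpVle : ∀ t : ℝ, 0 ≤ t → postVar σ₀ α t ≤ σ₀ ^ 2 := by
    intro t ht
    have h1' : (σ₀ ^ 2)⁻¹ ≤ (σ₀ ^ 2)⁻¹ + (α ^ 2)⁻¹ * t :=
      le_add_of_nonneg_right (by positivity)
    have h2' := inv_anti₀ (by positivity) h1'
    simpa [postVar] using h2'
  have hk0 : ∀ t : ℝ, 0 ≤ t → k t c σ₀ α ≤ k 0 c σ₀ α :=
    fun t ht => hmono c σ₀ α hc hσ hα Set.self_mem_Ici ht ht
  have hknn' : ∀ t : ℝ, 0 ≤ t → 0 ≤ k t c σ₀ α :=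
    fun t ht => hknn t c σ₀ α ht hc hσ hα
  have core : ∀ t ε : ℝ, 0 ≤ t → 0 ≤ ε →
      (k (t + ε) c σ₀ α - k t c σ₀ α ≤ 0 ∧
       ((1 + ε * (α ^ 2)⁻¹ * postVar σ₀ α t)⁻¹ ^ 2 - 1) * k t c σ₀ α ≤
         k (t + ε) c σ₀ α - k t c σ₀ α ∧
       -(2 * ε * (α ^ 2)⁻¹ * σ₀ ^ 2 * k 0 c σ₀ α) ≤
         ((1 + ε * (α ^ 2)⁻¹ * postVar σ₀ α t)⁻¹ ^ 2 - 1) * k t c σ₀ α) := by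
    intro t ε ht hε
    have htε : 0 ≤ t + ε := by linarith
    have hVt : 0 < postVar σ₀ α t := hpV t ht
    have hVε : 0 < postVar σ₀ α (t + ε) := hpV _ htε
    set Vt := postVar σ₀ α t with hVtdef
    set Vε := postVar σ₀ α (t + ε) with hVεdef
    have hσt : 0 < Real.sqrt Vt := Real.sqrt_pos.mpr hVt
    set σt := Real.sqrt Vt with hσtdef
    set lam := Real.sqrt Vε / σt with hlamdef
    have hlam : 0 < lam := div_pos (Real.sqrt_pos.mpr hVε) hσt
    have hσε : Real.sqrt Vε = lam * σt := by
      rw [hlamdef]; field_simp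
    have hVle : Vε ≤ Vt := by
      have hle : (σ₀ ^ 2)⁻¹ + (α ^ 2)⁻¹ * t ≤ (σ₀ ^ 2)⁻¹ + (α ^ 2)⁻¹ * (t + ε) := by
        have : (α ^ 2)⁻¹ * t ≤ (α ^ 2)⁻¹ * (t + ε) :=
          mul_le_mul_of_nonneg_left (by linarith) hα2.le
        linarith
      have := inv_anti₀ (by positivity) hle
      simpa [hVtdef, hVεdef, postVar] using this
    have hlam1 : lam ≤ 1 := by
      rw [hlamdef, div_le_one hσt]
      exact Real.sqrt_le_sqrt hVle
    have hlamsq : lam ^ 2 = Vε / Vt := by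
      rw [hlamdef, div_pow, Real.sq_sqrt hVε.le, hσtdef, Real.sq_sqrt hVt.le]
    have hA : (0:ℝ) < (σ₀ ^ 2)⁻¹ + (α ^ 2)⁻¹ * t := by positivity
    have hB : (0:ℝ) < (σ₀ ^ 2)⁻¹ + (α ^ 2)⁻¹ * (t + ε) := by positivity
    have hx : 0 ≤ ε * (α ^ 2)⁻¹ * Vt := by positivity
    have h1x : (0:ℝ) < 1 + ε * (α ^ 2)⁻¹ * Vt := by linarith
    have hratio : Vε / Vt = (1 + ε * (α ^ 2)⁻¹ * Vt)⁻¹ := by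
      have hprod : Vε / Vt * (1 + ε * (α ^ 2)⁻¹ * Vt) = 1 := by
        rw [hVεdef, hVtdef, postVar, postVar]
        field_simp
        ring
      exact eq_inv_of_mul_eq_one_left hprod
    -- main chain of scaling relations
    have hkt : k t c σ₀ α = k 0 c σt α := h1 t c σ₀ α ht hc hσ hα
    have hktε : k (t + ε) c σ₀ α = lam * k 0 (c * lam⁻¹ ^ 3) σt α := by
      rw [h1 (t + ε) c σ₀ α htε hc hσ hα, ← hVεdef, hσε]
      exact h2 c σt α lam hc hσt hα hlam
    have hlaminv : 1 ≤ lam⁻¹ ^ 3 := one_le_pow₀ ((one_le_inv₀ hlam).mpr hlam1)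
    have h3' := h3 c σt α (lam⁻¹ ^ 3) hc hσt hα hlaminv
    have hinvinv : (lam⁻¹ ^ 3)⁻¹ = lam ^ 3 := by
      rw [← inv_pow, inv_inv]
    have hmain : lam ^ 4 * k t c σ₀ α ≤ k (t + ε) c σ₀ α := by
      rw [hktε, hkt]
      have h3'' : lam ^ 3 * k 0 c σt α ≤ k 0 (c * lam⁻¹ ^ 3) σt α := by
        have h3c := h3'
        rw [hinvinv, mul_comm (lam⁻¹ ^ 3) c] at h3c
        exact h3c
      calc lam ^ 4 * k 0 c σt α = lam * (lam ^ 3 * k 0 c σt α) := by ring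
        _ ≤ lam * k 0 (c * lam⁻¹ ^ 3) σt α :=
            mul_le_mul_of_nonneg_left h3'' hlam.le
    have hlam4 : lam ^ 4 = (1 + ε * (α ^ 2)⁻¹ * Vt)⁻¹ ^ 2 := by
      have : lam ^ 4 = (lam ^ 2) ^ 2 := by ring
      rw [this, hlamsq, hratio]
    have hc2 : ((1 + ε * (α ^ 2)⁻¹ * Vt)⁻¹ ^ 2 - 1) * k t c σ₀ α ≤
        k (t + ε) c σ₀ α - k t c σ₀ α := by
      have hexp : (lam ^ 4 - 1) * k t c σ₀ α = lam ^ 4 * k t c σ₀ α - k t c σ₀ α := by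
        ring
      rw [← hlam4, hexp]
      linarith [hmain]
    refine ⟨?_, hc2, ?_⟩
    · have := hmono c σ₀ α hc hσ hα (Set.mem_Ici.mpr ht) (Set.mem_Ici.mpr htε)
        (by linarith : t ≤ t + ε)
      simpa using sub_nonpos.mpr this
    · set x := ε * (α ^ 2)⁻¹ * Vt with hxdef
      have hinv : (1 + x) * (1 + x)⁻¹ = 1 := mul_inv_cancel₀ h1x.ne'
      have hy0 : 0 ≤ (1 + x)⁻¹ := inv_nonneg.mpr h1x.le
      have hy1 : (1 + x)⁻¹ ≤ 1 := by
        rw [inv_le_one_iff₀]; right; linarith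
      have hb : 1 - (1 + x)⁻¹ ^ 2 ≤ 2 * x := by
        nlinarith [hinv, hy0, hy1, mul_nonneg hx (sub_nonneg.mpr hy1)]
      have hkt0 : 0 ≤ k t c σ₀ α := hknn' t ht
      have hstep1 : (1 - (1 + x)⁻¹ ^ 2) * k t c σ₀ α ≤ 2 * x * k t c σ₀ α :=
        mul_le_mul_of_nonneg_right hb hkt0
      have hstep2 : 2 * x * k t c σ₀ α ≤ 2 * ε * (α ^ 2)⁻¹ * σ₀ ^ 2 * k 0 c σ₀ α := by
        have hVk : Vt * k t c σ₀ α ≤ σ₀ ^ 2 * k 0 c σ₀ α :=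
          mul_le_mul (hpVle t ht) (hk0 t ht) hkt0 (by positivity)
        have h2e : 0 ≤ 2 * ε * (α ^ 2)⁻¹ := by positivity
        calc 2 * x * k t c σ₀ α = 2 * ε * (α ^ 2)⁻¹ * (Vt * k t c σ₀ α) := by
              rw [hxdef]; ring
          _ ≤ 2 * ε * (α ^ 2)⁻¹ * (σ₀ ^ 2 * k 0 c σ₀ α) :=
              mul_le_mul_of_nonneg_left hVk h2e
          _ = 2 * ε * (α ^ 2)⁻¹ * σ₀ ^ 2 * k 0 c σ₀ α := by ring
      have hgoal' : (1 - (1 + x)⁻¹ ^ 2) * k t c σ₀ α ≤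
          2 * ε * (α ^ 2)⁻¹ * σ₀ ^ 2 * k 0 c σ₀ α := le_trans hstep1 hstep2
      have heq : ((1 + x)⁻¹ ^ 2 - 1) * k t c σ₀ α =
          -((1 - (1 + x)⁻¹ ^ 2) * k t c σ₀ α) := by ring
      rw [heq]
      linarith
  refine ⟨core, ?_⟩
  have base : ∀ a b : ℝ, 0 ≤ a → a ≤ b →
      k a c σ₀ α - k b c σ₀ α ≤ 2 * (α ^ 2)⁻¹ * σ₀ ^ 2 * k 0 c σ₀ α * (b - a) := by
    intro a b ha hab
    have hε : 0 ≤ b - a := by linarith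
    obtain ⟨_, c2, c3⟩ := core a (b - a) ha hε
    rw [show a + (b - a) = b by ring] at c2
    linarith [c2, c3]
  intro t s ht hs
  rcases le_total s t with h | h
  · have hts : k t c σ₀ α ≤ k s c σ₀ α :=
      hmono c σ₀ α hc hσ hα (Set.mem_Ici.mpr hs) (Set.mem_Ici.mpr ht) h
    rw [abs_of_nonpos (by linarith), abs_of_nonneg (by linarith : (0:ℝ) ≤ t - s)]
    have := base s t hs h
    linarith
  · have hts : k s c σ₀ α ≤ k t c σ₀ α :=
      hmono c σ₀ α hc hσ hα (Set.mem_Ici.mpr ht) (Set.mem_Ici.mpr hs) h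
    rw [abs_of_nonneg (by linarith), abs_of_nonpos (by linarith : t - s ≤ 0)]
    have := base t s ht h
    linarith
end

section
/- Let k : (0, ∞) × (0, ∞) → ℝ (arguments (c, σ)) be differentiable, satisfy k(c, λσ) = λ·k(cλ⁻³, σ) for all c, σ, λ > 0, and suppose ∂k/∂c ≤ 0 everywhere. Then for each fixed c > 0 the map σ ↦ k(c, σ)/σ is nondecreasing on (0, ∞); consequently, for any σ₀, α > 0, the map t ↦ k(c, σ_t)/σ_t with σ_t := (σ₀⁻² + α⁻²t)^(−1/2) is nonincreasing in t on [0, ∞). -/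
/-- If `k(c, σ)` is differentiable on `(0,∞)²` (with partial
derivatives `kc, kσ`), satisfies `k(c, λσ) = λ·k(cλ⁻³, σ)` for all
`c, σ, λ > 0`, and `∂k/∂c ≤ 0` everywhere on `(0,∞)²`, then for each fixed
`c > 0` the map `σ ↦ k(c, σ)/σ` is nondecreasing on `(0, ∞)`; consequently, for
any `σ₀, α > 0`, the map `t ↦ k(c, σ_t)/σ_t` with
`σ_t = (σ₀⁻² + α⁻²t)^(−1/2)` is nonincreasing on `[0, ∞)`. -/
theorem stmt_9 (k kc kσ : ℝ → ℝ → ℝ)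
    (hdc : ∀ c σ : ℝ, 0 < c → 0 < σ → HasDerivAt (fun c' => k c' σ) (kc c σ) c)
    (hdσ : ∀ c σ : ℝ, 0 < c → 0 < σ → HasDerivAt (fun σ' => k c σ') (kσ c σ) σ)
    (hscale : ∀ c σ lam : ℝ, 0 < c → 0 < σ → 0 < lam →
      k c (lam * σ) = lam * k (c * lam⁻¹ ^ 3) σ)
    (hkc : ∀ c σ : ℝ, 0 < c → 0 < σ → kc c σ ≤ 0) :
    ∀ c : ℝ, 0 < c →
      MonotoneOn (fun σ => k c σ / σ) (Set.Ioi 0) ∧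
      (∀ σ₀ α : ℝ, 0 < σ₀ → 0 < α →
        AntitoneOn
          (fun t => k c ((Real.sqrt ((σ₀ ^ 2)⁻¹ + (α ^ 2)⁻¹ * t))⁻¹) /
            ((Real.sqrt ((σ₀ ^ 2)⁻¹ + (α ^ 2)⁻¹ * t))⁻¹))
          (Set.Ici 0)) := by
  -- antitone in c for each fixed σ
  have hanti : ∀ σ : ℝ, 0 < σ → AntitoneOn (fun c' => k c' σ) (Set.Ioi 0) := by
    intro σ hσ
    apply antitoneOn_of_deriv_nonpos (convex_Ioi 0)
    · intro x hx
      exact ((hdc x σ hx hσ).continuousAt).continuousWithinAt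
    · intro x hx
      rw [interior_Ioi] at hx
      exact ((hdc x σ hx hσ)).differentiableAt.differentiableWithinAt
    · intro x hx
      rw [interior_Ioi] at hx
      rw [(hdc x σ hx hσ).deriv]
      exact hkc x σ hx hσ
  intro c hc
  have hmono : MonotoneOn (fun σ => k c σ / σ) (Set.Ioi 0) := by
    intro σ₁ h1 σ₂ h2 h12
    simp only [Set.mem_Ioi] at h1 h2
    set lam := σ₂ / σ₁ with hlam
    have hlam1 : 1 ≤ lam := (one_le_div h1).2 h12
    have hlampos : 0 < lam := lt_of_lt_of_le one_pos hlam1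
    have hσ2 : σ₂ = lam * σ₁ := by rw [hlam, div_mul_cancel₀ _ h1.ne']
    have key : k c σ₂ = lam * k (c * lam⁻¹ ^ 3) σ₁ := by
      rw [hσ2]; exact hscale c σ₁ lam hc h1 hlampos
    have hinv : lam⁻¹ ^ 3 ≤ 1 := by
      apply pow_le_one₀ (by positivity)
      exact inv_le_one_of_one_le₀ hlam1
    have hcle : c * lam⁻¹ ^ 3 ≤ c := by
      nth_rewrite 2 [← mul_one c]
      exact mul_le_mul_of_nonneg_left hinv hc.le
    have hcpos : 0 < c * lam⁻¹ ^ 3 := by positivity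
    have hk : k c σ₁ ≤ k (c * lam⁻¹ ^ 3) σ₁ :=
      hanti σ₁ h1 (Set.mem_Ioi.2 hcpos) (Set.mem_Ioi.2 hc) hcle
    simp only
    rw [key, hσ2, mul_div_mul_left _ _ (ne_of_gt hlampos)]
    exact div_le_div_of_nonneg_right hk h1.le
  refine ⟨hmono, ?_⟩
  intro σ₀ α hσ₀ hα s hs t ht hst
  simp only [Set.mem_Ici] at hs ht
  have ha : 0 < (σ₀ ^ 2)⁻¹ := by positivity
  have hb : 0 < (α ^ 2)⁻¹ := by positivity
  have hps : 0 < (σ₀ ^ 2)⁻¹ + (α ^ 2)⁻¹ * s := by positivity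
  have hpt : 0 < (σ₀ ^ 2)⁻¹ + (α ^ 2)⁻¹ * t := by positivity
  have hle : (σ₀ ^ 2)⁻¹ + (α ^ 2)⁻¹ * s ≤ (σ₀ ^ 2)⁻¹ + (α ^ 2)⁻¹ * t := by
    gcongr
  have hss : 0 < Real.sqrt ((σ₀ ^ 2)⁻¹ + (α ^ 2)⁻¹ * s) := Real.sqrt_pos.2 hps
  have hst' : 0 < Real.sqrt ((σ₀ ^ 2)⁻¹ + (α ^ 2)⁻¹ * t) := Real.sqrt_pos.2 hpt
  have hsqrt : Real.sqrt ((σ₀ ^ 2)⁻¹ + (α ^ 2)⁻¹ * s) ≤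
      Real.sqrt ((σ₀ ^ 2)⁻¹ + (α ^ 2)⁻¹ * t) := Real.sqrt_le_sqrt hle
  have hinvle : (Real.sqrt ((σ₀ ^ 2)⁻¹ + (α ^ 2)⁻¹ * t))⁻¹ ≤
      (Real.sqrt ((σ₀ ^ 2)⁻¹ + (α ^ 2)⁻¹ * s))⁻¹ :=
    inv_anti₀ hss hsqrt
  exact hmono (Set.mem_Ioi.2 (inv_pos.2 hst')) (Set.mem_Ioi.2 (inv_pos.2 hss)) hinvle
end
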